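/- If G is the generator matrix of an [n,k,t,r] functional batch code over 𝔽₂, then θ_{t,r}(n) ≥ (2^k − 1)^t. -/
import Mathlib

lemma exists_subset_sum {ι M : Type*} [DecidableEq ι] [AddCommGroup M] [Module (ZMod 2) M]
    (g : ι → M) (R : Finset ι) (x : M)
    (hx : x ∈ Submodule.span (ZMod 2) (g '' (R : Set ι))) :
    ∃ S ⊆ R, x = ∑ j ∈ S, g j := by
  induction R using Finset.induction_on generalizing x with
  | empty =>
    simp only [Finset.coe_empty, Set.image_empty, Submodule.span_empty,
      Submodule.mem_bot] at hx
    exact ⟨∅, Finset.Subset.refl _, by simp [hx]⟩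
  | @insert a R ha ih =>
    rw [Finset.coe_insert, Set.image_insert_eq, Submodule.mem_span_insert] at hx
    obtain ⟨c, z, hz, rfl⟩ := hx
    obtain ⟨S, hS, rfl⟩ := ih z hz
    have hc : c = 0 ∨ c = 1 := by revert c; decide
    rcases hc with rfl | rfl
    · exact ⟨S, hS.trans (Finset.subset_insert _ _), by simp⟩
    · refine ⟨insert a S, Finset.insert_subset_insert _ hS, ?_⟩
      rw [Finset.sum_insert (fun h => ha (hS h))]
      simp



/-- `θ_{t,r}(n)`: the number of labellings `f : {1,…,n} → {0,1,…,t}` such that every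
nonzero label is used at least once and at most `r` times. -/
def theta (t r n : ℕ) : ℕ :=
  Finset.card (Finset.univ.filter fun f : Fin n → Fin (t + 1) =>
    ∀ ℓ : Fin (t + 1), ℓ.val ≠ 0 →
      1 ≤ (Finset.univ.filter fun j : Fin n => f j = ℓ).card ∧
      (Finset.univ.filter fun j : Fin n => f j = ℓ).card ≤ r)

/-- `G` is the generator matrix of an `[n,k,t,r]` functional batch code over `𝔽₂`:
for every `t`-tuple of nonzero vectors `α₁,…,α_t` in `𝔽₂^k` there exist pairwise
disjoint subsets `R₁,…,R_t` of the column index set, each of size at most `r`, such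
that each `α_ℓ` lies in the `𝔽₂`-linear span of the columns of `G` indexed by `R_ℓ`. -/
def IsFunctionalBatchCodeLoc (k n t r : ℕ) (G : Matrix (Fin k) (Fin n) (ZMod 2)) : Prop :=
  ∀ α : Fin t → Fin k → ZMod 2, (∀ ℓ, α ℓ ≠ 0) →
    ∃ R : Fin t → Finset (Fin n),
      (∀ ℓ₁ ℓ₂ : Fin t, ℓ₁ ≠ ℓ₂ → Disjoint (R ℓ₁) (R ℓ₂)) ∧
      (∀ ℓ : Fin t, (R ℓ).card ≤ r) ∧
      ∀ ℓ : Fin t,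
        α ℓ ∈ Submodule.span (ZMod 2) ((fun j i => G i j) '' (R ℓ : Set (Fin n)))

/-- If `G` generates an `[n,k,t,r]` functional batch code over `𝔽₂`, then
`θ_{t,r}(n) ≥ (2^k − 1)^t`. -/
theorem theta_ge_of_functional_batch_code (k n t r : ℕ)
    (G : Matrix (Fin k) (Fin n) (ZMod 2))
    (hG : IsFunctionalBatchCodeLoc k n t r G) :
    theta t r n ≥ (2 ^ k - 1) ^ t := by
  unfold theta
  have hG' := hG
  unfold IsFunctionalBatchCodeLoc at hG'
  classical
  set g : Fin n → (Fin k → ZMod 2) := fun j i => G i j with hg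
  -- key: refined selection
  have key : ∀ α : {α : Fin t → Fin k → ZMod 2 // ∀ ℓ, α ℓ ≠ 0},
      ∃ S : Fin t → Finset (Fin n),
        (∀ ℓ₁ ℓ₂ : Fin t, ℓ₁ ≠ ℓ₂ → Disjoint (S ℓ₁) (S ℓ₂)) ∧
        (∀ ℓ, (S ℓ).card ≤ r) ∧
        (∀ ℓ, (S ℓ).Nonempty) ∧
        (∀ ℓ, α.1 ℓ = ∑ j ∈ S ℓ, g j) := by
    rintro ⟨α, hα⟩
    obtain ⟨R, hdisj, hcard, hspan⟩ := hG α hα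
    have hsel : ∀ ℓ, ∃ S ⊆ R ℓ, α ℓ = ∑ j ∈ S, g j := fun ℓ =>
      exists_subset_sum g (R ℓ) (α ℓ) (hspan ℓ)
    choose S hSsub hSsum using hsel
    refine ⟨S, ?_, ?_, ?_, hSsum⟩
    · exact fun ℓ₁ ℓ₂ h =>
        ((hdisj ℓ₁ ℓ₂ h).mono (hSsub ℓ₁) (hSsub ℓ₂))
    · exact fun ℓ => le_trans (Finset.card_le_card (hSsub ℓ)) (hcard ℓ)
    · intro ℓ
      rcases Finset.eq_empty_or_nonempty (S ℓ) with he | hne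
      · exfalso; apply hα ℓ; rw [hSsum ℓ, he, Finset.sum_empty]
      · exact hne
  choose S hdisj hcard hne hsum using key
  -- the labelling associated to α
  set Φ : {α : Fin t → Fin k → ZMod 2 // ∀ ℓ, α ℓ ≠ 0} → (Fin n → Fin (t + 1)) :=
    fun α j => if h : ∃ ℓ, j ∈ S α ℓ then Fin.succ h.choose else 0 with hΦ
  have hmem : ∀ α j (ℓ : Fin t), Φ α j = Fin.succ ℓ ↔ j ∈ S α ℓ := by
    intro α j ℓ
    constructor
    · intro h
      by_cases hex : ∃ ℓ', j ∈ S α ℓ'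
      · simp only [hΦ, dif_pos hex] at h
        have := Fin.succ_injective _ h
        rw [← this]; exact hex.choose_spec
      · simp only [hΦ, dif_neg hex] at h
        exact absurd h.symm (Fin.succ_ne_zero ℓ)
    · intro h
      have hex : ∃ ℓ', j ∈ S α ℓ' := ⟨ℓ, h⟩
      simp only [hΦ, dif_pos hex]
      congr 1
      by_contra hne'
      exact Finset.disjoint_left.mp (hdisj α _ _ hne') hex.choose_spec h
  -- fibers
  have hfiber : ∀ α (ℓ : Fin t),
      (Finset.univ.filter fun j : Fin n => Φ α j = Fin.succ ℓ) = S α ℓ := by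
    intro α ℓ; ext j; simp [hmem α j ℓ]
  -- Φ lands in the filter set
  have hΦmem : ∀ α, Φ α ∈ (Finset.univ.filter fun f : Fin n → Fin (t + 1) =>
      ∀ ℓ : Fin (t + 1), ℓ.val ≠ 0 →
        1 ≤ (Finset.univ.filter fun j : Fin n => f j = ℓ).card ∧
        (Finset.univ.filter fun j : Fin n => f j = ℓ).card ≤ r) := by
    intro α
    simp only [Finset.mem_filter, Finset.mem_univ, true_and]
    intro m hm
    induction m using Fin.cases with
    | zero => exact absurd rfl hm
    | succ ℓ =>
      rw [hfiber α ℓ]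
      exact ⟨Finset.card_pos.mpr (hne α ℓ), hcard α ℓ⟩
  -- injectivity
  have hinj : Function.Injective Φ := by
    intro α β h
    apply Subtype.ext
    funext ℓ
    rw [hsum α ℓ, hsum β ℓ]
    congr 1
    rw [← hfiber α ℓ, ← hfiber β ℓ, h]
  -- counting
  have hcount : Fintype.card {α : Fin t → Fin k → ZMod 2 // ∀ ℓ, α ℓ ≠ 0}
      = (2 ^ k - 1) ^ t := by
    rw [Fintype.card_congr (Equiv.subtypePiEquivPi (p := fun _ (v : Fin k → ZMod 2) => v ≠ 0))]
    rw [Fintype.card_pi]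
    have h1 : Fintype.card {v : Fin k → ZMod 2 // v ≠ 0} = 2 ^ k - 1 := by
      rw [Fintype.card_subtype_compl, Fintype.card_pi]
      simp [Fintype.card_subtype_eq (0 : Fin k → ZMod 2)]
    simp [h1]
  calc (2 ^ k - 1) ^ t = Fintype.card {α : Fin t → Fin k → ZMod 2 // ∀ ℓ, α ℓ ≠ 0} :=
        hcount.symm
    _ ≤ _ := by
        apply Finset.card_le_card_of_injOn Φ (fun α _ => hΦmem α)
        intro a _ b _ hab
        exact hinj hab
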